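/- In the extended union-intersection type system with unrestricted type formation and the supplementary subtyping axioms, every type A is equivalent (A ≤_ext T and T ≤_ext A) to a type T in disjunctive normal form conforming to the restricted grammar: a finite union of finite intersections of raw types, where raw types have the shape α or S → T with S an intersection and T a union. -/

import Mathlib

/-- Unrestricted union-intersection types A ::= α | A→A | ⋂A | ⋃A. -/
inductive ATy : Type
  | atom : ℕ → ATy
  | arrow : ATy → ATy → ATy
  | inter : List ATy → ATy
  | union : List ATy → ATy

/-- The extended subtype relation ≤_ext: the standard union-intersection
rules, reflexivity, transitivity, associativity/commutativity of ⋂ and ⋃,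
and the supplementary axioms (sup₁) and (sup₂). -/
inductive SubE : ATy → ATy → Prop
  | refl (A : ATy) : SubE A A
  | trans {A B C} : SubE A B → SubE B C → SubE A C
  | arrow {A A' B B'} : SubE A' A → SubE B B' → SubE (.arrow A B) (.arrow A' B')
  -- intersection projection and pairing
  | interProj {A B : ATy} {l : List ATy} : SubE A B → SubE (.inter (A :: l)) B
  | interPair {A : ATy} {l : List ATy} : (∀ B ∈ l, SubE A B) → SubE A (.inter l)
  -- union injection and copairing
  | unionInj {A B : ATy} {l : List ATy} : SubE A B → SubE A (.union (B :: l))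
  | unionCopair {l : List ATy} {B : ATy} : (∀ A ∈ l, SubE A B) → SubE (.union l) B
  -- associativity and commutativity of intersections and unions
  | interPerm {l l' : List ATy} : l.Perm l' → SubE (.inter l) (.inter l')
  | interFlat {l l' : List ATy} : SubE (.inter (ATy.inter l :: l')) (.inter (l ++ l'))
  | interUnflat {l l' : List ATy} : SubE (.inter (l ++ l')) (.inter (ATy.inter l :: l'))
  | unionPerm {l l' : List ATy} : l.Perm l' → SubE (.union l) (.union l')
  | unionFlat {l l' : List ATy} : SubE (.union (ATy.union l :: l')) (.union (l ++ l'))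
  | unionUnflat {l l' : List ATy} : SubE (.union (l ++ l')) (.union (ATy.union l :: l'))
  -- supplementary axioms
  | sup1 {A : ATy} {l : List ATy} :
      SubE (.inter [A, .union l]) (.union (l.map fun B => ATy.inter [A, B]))
  | sup2 {l : List ATy} {B : ATy} :
      SubE (.inter (l.map fun A => ATy.arrow A B)) (.arrow (.union l) B)

mutual
/-- Raw types of the restricted grammar R ::= α | S → T. -/
inductive IsR : ATy → Prop
  | atom (a : ℕ) : IsR (.atom a)
  | arrow {S T : ATy} : IsS S → IsT T → IsR (.arrow S T)
/-- Subsidiary types S ::= ⋂R. -/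
inductive IsS : ATy → Prop
  | inter {l : List ATy} : (∀ R ∈ l, IsR R) → IsS (.inter l)
/-- Restricted types T ::= ⋃S (disjunctive normal forms). -/
inductive IsT : ATy → Prop
  | union {l : List ATy} : (∀ S ∈ l, IsS S) → IsT (.union l)
end

namespace DnfAux

/-- Interpret a DNF (list of conjunct lists) as a union of intersections. -/
def toT (d : List (List ATy)) : ATy := .union (d.map ATy.inter)

lemma inter_le_mem {A : ATy} {l : List ATy} (h : A ∈ l) : SubE (.inter l) A := by
  obtain ⟨s, t, rfl⟩ := List.append_of_mem h
  exact SubE.trans (SubE.interPerm List.perm_middle) (SubE.interProj (SubE.refl A))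

lemma le_union_mem {A : ATy} {l : List ATy} (h : A ∈ l) : SubE A (.union l) := by
  obtain ⟨s, t, rfl⟩ := List.append_of_mem h
  exact SubE.trans (SubE.unionInj (SubE.refl A)) (SubE.unionPerm List.perm_middle.symm)

lemma inter_mono {l l' : List ATy} (h : ∀ B ∈ l', ∃ A ∈ l, SubE A B) :
    SubE (.inter l) (.inter l') :=
  SubE.interPair fun B hB => by
    obtain ⟨A, hA, hAB⟩ := h B hB
    exact SubE.trans (inter_le_mem hA) hAB

lemma union_mono {l l' : List ATy} (h : ∀ A ∈ l, ∃ B ∈ l', SubE A B) :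
    SubE (.union l) (.union l') :=
  SubE.unionCopair fun A hA => by
    obtain ⟨B, hB, hAB⟩ := h A hA
    exact SubE.trans hAB (le_union_mem hB)

lemma inter_le_of_subset {l l' : List ATy} (h : l' ⊆ l) : SubE (.inter l) (.inter l') :=
  inter_mono fun B hB => ⟨B, h hB, SubE.refl B⟩

lemma forall₂_mem_right {α β : Type*} {r : α → β → Prop} {l : List α} {l' : List β}
    (h : List.Forall₂ r l l') : ∀ b ∈ l', ∃ a ∈ l, r a b := by
  induction h with
  | nil => simp
  | cons hr _ ih =>
    intro b hb
    rcases List.mem_cons.mp hb with rfl | hb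
    · exact ⟨_, List.mem_cons_self, hr⟩
    · obtain ⟨a, ha, har⟩ := ih b hb
      exact ⟨a, List.mem_cons_of_mem _ ha, har⟩

lemma exists_forall₂ {α β : Type*} {P : α → β → Prop} :
    ∀ {l : List α}, (∀ a ∈ l, ∃ b, P a b) → ∃ l', List.Forall₂ P l l'
  | [], _ => ⟨[], List.Forall₂.nil⟩
  | a :: l, h => by
    obtain ⟨b, hb⟩ := h a (List.mem_cons_self)
    obtain ⟨l', hl'⟩ := exists_forall₂ (fun x hx => h x (List.mem_cons_of_mem _ hx))
    exact ⟨b :: l', List.Forall₂.cons hb hl'⟩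

/-- inter [inter a, inter b] ≤ inter (a ++ b) -/
lemma pair_le_append (a b : List ATy) :
    SubE (.inter [ATy.inter a, ATy.inter b]) (.inter (a ++ b)) := by
  refine SubE.trans SubE.interFlat ?_
  refine SubE.trans (SubE.interPerm (List.perm_append_comm)) ?_
  refine SubE.trans SubE.interFlat (SubE.interPerm List.perm_append_comm)

lemma append_le_pair (a b : List ATy) :
    SubE (.inter (a ++ b)) (.inter [ATy.inter a, ATy.inter b]) := by
  refine SubE.interPair fun B hB => ?_
  rcases List.mem_cons.mp hB with rfl | hB
  · exact SubE.interPair fun C hC => inter_le_mem (List.mem_append_left _ hC)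
  · simp only [List.mem_singleton] at hB
    subst hB
    exact SubE.interPair fun C hC => inter_le_mem (List.mem_append_right _ hC)

/-- all ways to pick one conjunct list from each DNF and concatenate -/
def comb : List (List (List ATy)) → List (List ATy)
  | [] => [[]]
  | d :: ds => d.flatMap fun a => (comb ds).map (a ++ ·)

lemma mem_comb_cons {b : List ATy} {d : List (List ATy)} {ds : List (List (List ATy))} :
    b ∈ comb (d :: ds) ↔ ∃ a ∈ d, ∃ c ∈ comb ds, b = a ++ c := by
  simp only [comb, List.mem_flatMap, List.mem_map]
  constructor
  · rintro ⟨a, ha, c, hc, rfl⟩; exact ⟨a, ha, c, hc, rfl⟩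
  · rintro ⟨a, ha, c, hc, rfl⟩; exact ⟨a, ha, c, hc, rfl⟩

lemma comb_spec {ds : List (List (List ATy))} {b : List ATy} (hb : b ∈ comb ds) :
    ∀ d ∈ ds, ∃ a ∈ d, ∀ x ∈ a, x ∈ b := by
  induction ds generalizing b with
  | nil => simp
  | cons d ds ih =>
    rw [mem_comb_cons] at hb
    obtain ⟨a, ha, c, hc, rfl⟩ := hb
    intro d' hd'
    rcases List.mem_cons.mp hd' with rfl | hd'
    · exact ⟨a, ha, fun x hx => List.mem_append_left _ hx⟩
    · obtain ⟨a', ha', hsub⟩ := ih hc d' hd'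
      exact ⟨a', ha', fun x hx => List.mem_append_right _ (hsub x hx)⟩

lemma comb_raw {ds : List (List (List ATy))}
    (h : ∀ d ∈ ds, ∀ a ∈ d, ∀ r ∈ a, IsR r) :
    ∀ b ∈ comb ds, ∀ r ∈ b, IsR r := by
  induction ds with
  | nil => intro b hb; simp [comb] at hb; subst hb; simp
  | cons d ds ih =>
    intro b hb
    rw [mem_comb_cons] at hb
    obtain ⟨a, ha, c, hc, rfl⟩ := hb
    intro r hr
    rcases List.mem_append.mp hr with hr | hr
    · exact h d (List.mem_cons_self) a ha r hr
    · exact ih (fun d' hd' => h d' (List.mem_cons_of_mem _ hd')) c hc r hr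

lemma dist_ge (ds : List (List (List ATy))) :
    SubE (toT (comb ds)) (.inter (ds.map toT)) := by
  refine SubE.unionCopair fun X hX => ?_
  simp only [List.mem_map] at hX
  obtain ⟨b, hb, rfl⟩ := hX
  refine SubE.interPair fun U hU => ?_
  simp only [List.mem_map] at hU
  obtain ⟨d, hd, rfl⟩ := hU
  obtain ⟨a, ha, hsub⟩ := comb_spec hb d hd
  refine SubE.trans (inter_le_of_subset hsub) ?_
  exact le_union_mem (List.mem_map_of_mem ha)

lemma dist_le (ds : List (List (List ATy))) :
    SubE (.inter (ds.map toT)) (toT (comb ds)) := by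
  induction ds with
  | nil =>
    exact SubE.unionInj (SubE.refl _)
  | cons d ds ih =>
    -- step A: inter (toT d :: rest) ≤ inter [toT d, inter rest]
    have hA : SubE (.inter ((d :: ds).map toT)) (.inter [toT d, .inter (ds.map toT)]) := by
      refine SubE.interPair fun B hB => ?_
      rcases List.mem_cons.mp hB with rfl | hB
      · exact inter_le_mem (List.mem_cons_self)
      · simp only [List.mem_singleton] at hB
        subst hB
        exact SubE.interPair fun C hC => inter_le_mem (List.mem_cons_of_mem _ hC)
    -- step B: congruence with ih
    have hB : SubE (.inter [toT d, .inter (ds.map toT)]) (.inter [toT d, toT (comb ds)]) := by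
      refine SubE.interPair fun B hB => ?_
      rcases List.mem_cons.mp hB with rfl | hB
      · exact inter_le_mem (List.mem_cons_self)
      · simp only [List.mem_singleton] at hB
        subst hB
        exact SubE.trans (inter_le_mem (by simp)) ih
    refine SubE.trans hA (SubE.trans hB ?_)
    -- step C: sup1 with A = toT d
    refine SubE.trans (SubE.sup1 (A := toT d) (l := (comb ds).map ATy.inter)) ?_
    refine SubE.unionCopair fun X hX => ?_
    simp only [List.map_map, List.mem_map, Function.comp] at hX
    obtain ⟨b, hb, rfl⟩ := hX
    -- X = inter [toT d, inter b], b ∈ comb ds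
    have perm1 : SubE (ATy.inter [toT d, ATy.inter b]) (.inter [ATy.inter b, toT d]) :=
      SubE.interPerm (by constructor)
    refine SubE.trans perm1 ?_
    refine SubE.trans (SubE.sup1 (A := ATy.inter b) (l := d.map ATy.inter)) ?_
    refine SubE.unionCopair fun Y hY => ?_
    simp only [List.map_map, List.mem_map, Function.comp] at hY
    obtain ⟨a, ha, rfl⟩ := hY
    -- Y = inter [inter b, inter a]
    have perm2 : SubE (ATy.inter [ATy.inter b, ATy.inter a]) (.inter [ATy.inter a, ATy.inter b]) :=
      SubE.interPerm (by constructor)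
    refine SubE.trans perm2 (SubE.trans (pair_le_append a b) ?_)
    refine le_union_mem (List.mem_map_of_mem ?_)
    rw [mem_comb_cons]
    exact ⟨a, ha, b, hb, rfl⟩

/-- Key statement proved by strong induction on size. -/
lemma key : ∀ A : ATy, ∃ d : List (List ATy),
    (∀ a ∈ d, ∀ r ∈ a, IsR r) ∧ SubE A (toT d) ∧ SubE (toT d) A := by
  suffices h : ∀ n (A : ATy), sizeOf A ≤ n → ∃ d : List (List ATy),
      (∀ a ∈ d, ∀ r ∈ a, IsR r) ∧ SubE A (toT d) ∧ SubE (toT d) A by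
    intro A; exact h (sizeOf A) A le_rfl
  intro n
  induction n with
  | zero => intro A hA; cases A <;> simp at hA
  | succ n ih =>
    intro A hA
    cases A with
    | atom a =>
      refine ⟨[[.atom a]], by simp; exact IsR.atom a, ?_, ?_⟩
      · exact SubE.unionInj (SubE.interPair (by intro B hB; simp at hB; subst hB; exact SubE.refl _))
      · exact SubE.unionCopair (by
          intro X hX
          simp only [toT, List.map] at hX
          simp at hX
          subst hX
          exact SubE.interProj (SubE.refl _))
    | arrow P Q =>
      have hP : sizeOf P ≤ n := by simp at hA; omega
      have hQ : sizeOf Q ≤ n := by simp at hA; omega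
      obtain ⟨dP, rawP, leP, geP⟩ := ih P hP
      obtain ⟨dQ, rawQ, leQ, geQ⟩ := ih Q hQ
      -- conjuncts: for each a ∈ dP, arrow (inter a) (toT dQ)
      refine ⟨[dP.map fun a => ATy.arrow (ATy.inter a) (toT dQ)], ?_, ?_, ?_⟩
      · intro a ha r hr
        simp at ha; subst ha
        simp only [List.mem_map] at hr
        obtain ⟨a', ha', rfl⟩ := hr
        refine IsR.arrow (IsS.inter (rawP a' ha')) ?_
        refine IsT.union ?_
        intro S hS
        simp only [toT, List.mem_map] at hS
        obtain ⟨b, hb, rfl⟩ := hS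
        exact IsS.inter (rawQ b hb)
      · -- arrow P Q ≤ toT result
        have h1 : SubE (.arrow P Q) (.arrow (toT dP) (toT dQ)) := SubE.arrow geP leQ
        have h2 : SubE (.arrow (toT dP) (toT dQ))
            (.inter (dP.map fun a => ATy.arrow (ATy.inter a) (toT dQ))) := by
          refine SubE.interPair fun B hB => ?_
          simp only [List.mem_map] at hB
          obtain ⟨a, ha, rfl⟩ := hB
          exact SubE.arrow (le_union_mem (List.mem_map_of_mem ha)) (SubE.refl _)
        exact SubE.trans h1 (SubE.trans h2 (SubE.unionInj (SubE.refl _)))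
      · -- toT result ≤ arrow P Q
        have h2 : SubE (.inter (dP.map fun a => ATy.arrow (ATy.inter a) (toT dQ)))
            (.arrow (toT dP) (toT dQ)) := by
          have := SubE.sup2 (l := dP.map ATy.inter) (B := toT dQ)
          rw [List.map_map] at this
          exact this
        have h1 : SubE (.arrow (toT dP) (toT dQ)) (.arrow P Q) := SubE.arrow leP geQ
        refine SubE.unionCopair ?_
        intro X hX
        simp only [toT, List.map_cons, List.map_nil, List.mem_singleton] at hX
        subst hX
        exact SubE.trans h2 h1
    | inter l =>
      have hl : ∀ B ∈ l, sizeOf B ≤ n := by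
        intro B hB
        have h1 : sizeOf B < sizeOf l := List.sizeOf_lt_of_mem hB
        simp at hA; omega
      obtain ⟨ds, hds⟩ := exists_forall₂ (P := fun B d =>
        (∀ a ∈ d, ∀ r ∈ a, IsR r) ∧ SubE B (toT d) ∧ SubE (toT d) B)
        (fun B hB => ih B (hl B hB))
      refine ⟨comb ds, ?_, ?_, ?_⟩
      · refine comb_raw fun d hd => ?_
        obtain ⟨B, _, hraw, _, _⟩ := forall₂_mem_right hds d hd
        exact hraw
      · -- inter l ≤ inter (ds.map toT) ≤ toT (comb ds)
        refine SubE.trans ?_ (dist_le ds)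
        refine inter_mono fun U hU => ?_
        simp only [List.mem_map] at hU
        obtain ⟨d, hd, rfl⟩ := hU
        obtain ⟨B, hB, _, hle, _⟩ := forall₂_mem_right hds d hd
        exact ⟨B, hB, hle⟩
      · refine SubE.trans (dist_ge ds) ?_
        refine inter_mono fun B hB => ?_
        have : ∃ d ∈ ds, SubE (toT d) B := by
          clear hl hA
          induction hds with
          | nil => simp at hB
          | cons hr _ ih2 =>
            rcases List.mem_cons.mp hB with rfl | hB
            · exact ⟨_, List.mem_cons_self, hr.2.2⟩
            · obtain ⟨d, hd, h⟩ := ih2 hB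
              exact ⟨d, List.mem_cons_of_mem _ hd, h⟩
        obtain ⟨d, hd, h⟩ := this
        exact ⟨toT d, List.mem_map_of_mem hd, h⟩
    | union l =>
      have hl : ∀ B ∈ l, sizeOf B ≤ n := by
        intro B hB
        have h1 : sizeOf B < sizeOf l := List.sizeOf_lt_of_mem hB
        simp at hA; omega
      obtain ⟨ds, hds⟩ := exists_forall₂ (P := fun B d =>
        (∀ a ∈ d, ∀ r ∈ a, IsR r) ∧ SubE B (toT d) ∧ SubE (toT d) B)
        (fun B hB => ih B (hl B hB))
      refine ⟨ds.flatMap id, ?_, ?_, ?_⟩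
      · intro a ha
        simp only [List.mem_flatMap, id] at ha
        obtain ⟨d, hd, ha⟩ := ha
        obtain ⟨B, _, hraw, _, _⟩ := forall₂_mem_right hds d hd
        exact hraw a ha
      · refine SubE.unionCopair fun B hB => ?_
        have : ∃ d ∈ ds, SubE B (toT d) := by
          clear hl hA
          induction hds with
          | nil => simp at hB
          | cons hr _ ih2 =>
            rcases List.mem_cons.mp hB with rfl | hB
            · exact ⟨_, List.mem_cons_self, hr.2.1⟩
            · obtain ⟨d, hd, h⟩ := ih2 hB
              exact ⟨d, List.mem_cons_of_mem _ hd, h⟩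
        obtain ⟨d, hd, h⟩ := this
        refine SubE.trans h (union_mono fun X hX => ⟨X, ?_, SubE.refl X⟩)
        simp only [List.mem_map] at hX ⊢
        obtain ⟨b, hb, rfl⟩ := hX
        exact ⟨b, by simp only [List.mem_flatMap, id]; exact ⟨d, hd, hb⟩, rfl⟩
      · refine SubE.unionCopair fun X hX => ?_
        simp only [List.mem_map, List.mem_flatMap, id] at hX
        obtain ⟨b, ⟨d, hd, hb⟩, rfl⟩ := hX
        obtain ⟨B, hBl, _, _, hge⟩ := forall₂_mem_right hds d hd
        refine SubE.trans ?_ (le_union_mem hBl)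
        exact SubE.trans (le_union_mem (List.mem_map_of_mem hb)) hge

end DnfAux

/-- In the extended system, every type A is equivalent to a
type T in disjunctive normal form conforming to the restricted grammar. -/
theorem dnf_equivalent :
    ∀ A : ATy, ∃ T : ATy, IsT T ∧ SubE A T ∧ SubE T A := by
  intro A
  obtain ⟨d, hraw, hle, hge⟩ := DnfAux.key A
  refine ⟨DnfAux.toT d, ?_, hle, hge⟩
  refine IsT.union fun S hS => ?_
  simp only [List.mem_map] at hS
  obtain ⟨a, ha, rfl⟩ := hS
  exact IsS.inter (hraw a ha)
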